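/- Let F ∈ ℝ^{n×n}, G ∈ ℝ^{n×m}, P positive definite, R the diagonal matrix diag(1/γ_1, …, 1/γ_m) with γ i > 0, and a ∈ (0,1). Suppose the block matrix [[aP - FᵀPF, -FᵀPG], [-GᵀPF, (1-a)R - GᵀPG]] is positive semidefinite. Then every trajectory x : ℕ → ℝ^n with x 1 = 0, x (k+1) = F (x k) + G (u k), and (u k i)^2 ≤ γ i for all k and i, satisfies (x k)ᵀ P (x k) ≤ m for all k ≥ 1. -/

import Mathlib

open Matrix

theorem stmt_4 (n m : ℕ) (F : Matrix (Fin n) (Fin n) ℝ) (G : Matrix (Fin n) (Fin m) ℝ)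
    (P : Matrix (Fin n) (Fin n) ℝ) (hP : P.PosDef)
    (γ : Fin m → ℝ) (hγ : ∀ i, 0 < γ i)
    (R : Matrix (Fin m) (Fin m) ℝ) (hR : R = Matrix.diagonal fun i => 1 / γ i)
    (a : ℝ) (ha : a ∈ Set.Ioo (0:ℝ) 1)
    (hQ : (Matrix.fromBlocks (a • P - Fᵀ * P * F) (-(Fᵀ * P * G))
        (-(Gᵀ * P * F)) ((1 - a) • R - Gᵀ * P * G)).PosSemidef)
    (x : ℕ → Fin n → ℝ) (u : ℕ → Fin m → ℝ)
    (hx1 : x 1 = 0)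
    (hdyn : ∀ k : ℕ, x (k + 1) = F.mulVec (x k) + G.mulVec (u k))
    (hu : ∀ k : ℕ, ∀ i : Fin m, (u k i) ^ 2 ≤ γ i) :
    ∀ k : ℕ, 1 ≤ k → (x k) ⬝ᵥ P.mulVec (x k) ≤ (m : ℝ) := by
  obtain ⟨ha0, ha1⟩ := ha
  -- u k ⬝ᵥ R u k ≤ m
  have hRu : ∀ k : ℕ, u k ⬝ᵥ R.mulVec (u k) ≤ (m : ℝ) := by
    intro k
    subst hR
    simp only [dotProduct, Matrix.mulVec_diagonal]
    calc ∑ i, u k i * (1 / γ i * u k i)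
        ≤ ∑ _i : Fin m, (1:ℝ) := by
          refine Finset.sum_le_sum fun i _ => ?_
          rw [show u k i * (1 / γ i * u k i) = u k i ^ 2 / γ i by ring,
            div_le_one (hγ i)]
          exact hu k i
      _ = (m : ℝ) := by simp
  -- key dissipation inequality
  have key : ∀ k : ℕ,
      x (k+1) ⬝ᵥ P.mulVec (x (k+1)) ≤ a * (x k ⬝ᵥ P.mulVec (x k)) + (1-a) * (u k ⬝ᵥ R.mulVec (u k)) := by
    intro k
    have hz := hQ.dotProduct_mulVec_nonneg (Sum.elim (x k) (u k))
    simp only [star_trivial] at hz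
    have hexp : Sum.elim (x k) (u k) ⬝ᵥ (Matrix.fromBlocks (a • P - Fᵀ * P * F) (-(Fᵀ * P * G))
        (-(Gᵀ * P * F)) ((1 - a) • R - Gᵀ * P * G)).mulVec (Sum.elim (x k) (u k))
        = a * (x k ⬝ᵥ P.mulVec (x k)) + (1-a) * (u k ⬝ᵥ R.mulVec (u k))
          - (F.mulVec (x k) + G.mulVec (u k)) ⬝ᵥ P.mulVec (F.mulVec (x k) + G.mulVec (u k)) := by
      simp [Matrix.fromBlocks_mulVec, Matrix.sub_mulVec, Matrix.neg_mulVec,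
        Matrix.smul_mulVec, Matrix.mulVec_add, dotProduct_add, add_dotProduct,
        dotProduct_sub, dotProduct_neg, dotProduct_smul, Matrix.dotProduct_mulVec,
        ← Matrix.mulVec_mulVec, Matrix.vecMul_transpose, Matrix.add_vecMul, smul_eq_mul]
      ring
    rw [hexp] at hz
    rw [hdyn k]
    linarith
  intro k hk
  induction k with
  | zero => omega
  | succ k ih =>
    rcases Nat.eq_or_lt_of_le hk with h | h
    · have : k = 0 := by omega
      subst this
      rw [hx1]
      simp [Matrix.mulVec_zero]
    · have hk' : 1 ≤ k := by omega
      have ihk := ih hk'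
      have h1 := key k
      have h2 := hRu k
      nlinarith [ihk, h1, h2]
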